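/- Let Λ be a 𝒞-collection containing some λ ≤ β̄_l. If λ + β̄_{l+1} − β̄_l ∈ Λ ∩ ℤ_{≤ β̄_{l+1}}, then λ + β̄_r − β̄_l ∈ Λ for every l < r ≤ g. In particular, a one-step closure property λ ≤ β̄_l ⇒ λ + β̄_{l+1} − β̄_l ∈ Λ implies the full multi-step closure λ + β̄_r − β̄_l ∈ Λ for all r > l. -/
import Mathlib


/-- For `Λ ⊆ ℤ_{>0}` with `Λ + S_Γ ⊆ Λ`, the one-step closure property
(`λ ∈ Λ`, `λ ≤ β̄_l` implies `λ + β̄_{l+1} − β̄_l ∈ Λ`, with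
`λ + β̄_{l+1} − β̄_l ≤ β̄_{l+1}`) implies the full multi-step closure
`λ + β̄_r − β̄_l ∈ Λ` for all `l < r ≤ g`. -/
theorem one_step_implies_multi_step (n g : ℕ) (hn : 2 ≤ n) (hg : 1 ≤ g)
    (bb : ℕ → ℕ)
    (hpos : ∀ j, 1 ≤ j → j ≤ g → 0 < bb j)
    (hmono : ∀ j, 1 ≤ j → j < g → bb j < bb (j + 1))
    (hbig : ∀ j, 1 ≤ j → j < g → 2 * bb j < bb (j + 1))
    (SΓ : Set ℕ)
    (hSΓ : SΓ = (AddSubmonoid.closure ({n} ∪ bb '' Set.Icc 1 g) : AddSubmonoid ℕ))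
    (Λ : Set ℕ)
    (hΛpos : ∀ m ∈ Λ, 0 < m)
    (hmod : ∀ m ∈ Λ, ∀ s ∈ SΓ, m + s ∈ Λ)
    (hstep : ∀ μ ∈ Λ, ∀ l, 1 ≤ l → l < g → μ ≤ bb l → μ + bb (l + 1) - bb l ∈ Λ) :
    ∀ lam ∈ Λ, ∀ l r, 1 ≤ l → l < r → r ≤ g → lam ≤ bb l →
      lam + bb r - bb l ∈ Λ := by
  intro lam hlam l r hl hlr hrg hle
  have key : ∀ k, l < k → k ≤ g → lam + bb k - bb l ∈ Λ ∧ lam + bb k - bb l ≤ bb k := by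
    intro k
    induction k with
    | zero => omega
    | succ k ih =>
      intro hlk hkg
      rcases Nat.lt_or_ge l k with h | h
      · obtain ⟨hmem, hb⟩ := ih h (by omega)
        have hpos' := hΛpos _ hmem
        have hm := hmono k (by omega) (by omega)
        have hmem' := hstep _ hmem k (by omega) (by omega) hb
        constructor
        · have : lam + bb k - bb l + bb (k + 1) - bb k = lam + bb (k + 1) - bb l := by
            omega
          rwa [this] at hmem'
        · omega
      · have hkl : k = l := by omega
        subst hkl
        have hm := hmono k hl (by omega)
        have hmem' := hstep _ hlam k hl (by omega) hle
        exact ⟨hmem', by omega⟩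
  exact (key r hlr hrg).1
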